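/- Let v : ℝ → ℝ be differentiable with v' ≤ v² − 1 on all of ℝ and −1 < v(t) < 1 for all t. Then v is strictly decreasing, sup v = 1 is approached as t → −∞ (i.e. lim_{t→−∞} v(t) = 1), and lim_{t→+∞} v(t) = −1. -/

import Mathlib

open Filter

private lemma aux_anti (v : ℝ → ℝ) (hv : Differentiable ℝ v)
    (hv' : ∀ t, deriv v t ≤ (v t) ^ 2 - 1)
    (hbound : ∀ t, -1 < v t ∧ v t < 1) : StrictAnti v := by
  apply strictAnti_of_deriv_neg
  intro t
  have h := hbound t
  nlinarith [hv' t]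

private lemma aux_tendsto (v : ℝ → ℝ) (hv : Differentiable ℝ v)
    (hv' : ∀ t, deriv v t ≤ (v t) ^ 2 - 1)
    (hbound : ∀ t, -1 < v t ∧ v t < 1) :
    Tendsto v atBot (nhds 1) := by
  have hanti := aux_anti v hv hv' hbound
  rw [tendsto_order]
  constructor
  · intro a ha
    suffices h : ∃ t, a < v t by
      obtain ⟨t, ht⟩ := h
      filter_upwards [eventually_le_atBot t] with s hs
      exact ht.trans_le (hanti.antitone hs)
    by_contra h
    push_neg at h
    have hv0 := hbound 0
    have ha0 : v 0 ≤ a := h 0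
    set b : ℝ := max |v 0| |a| with hb
    have hb1 : b < 1 := by
      apply max_lt
      · rw [abs_lt]; exact ⟨hv0.1, hv0.2⟩
      · rw [abs_lt]; constructor <;> [linarith; exact ha]
    have hb0 : 0 ≤ b := le_trans (abs_nonneg _) (le_max_left _ _)
    set ε : ℝ := 1 - b ^ 2 with hε
    have hεpos : 0 < ε := by nlinarith
    -- v x ∈ [v 0, a] for x ≤ 0, so v x ^ 2 ≤ b ^ 2
    have hsq : ∀ x ≤ (0:ℝ), v x ^ 2 ≤ b ^ 2 := by
      intro x hx
      have h1 : v 0 ≤ v x := hanti.antitone hx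
      have h2 : v x ≤ a := h x
      have hb1' : -b ≤ v x := by
        have := neg_abs_le (v 0)
        have := le_max_left |v 0| |a|
        linarith
      have hb2' : v x ≤ b := by
        have := le_abs_self a
        have := le_max_right |v 0| |a|
        linarith
      nlinarith
    set g : ℝ → ℝ := fun t => v t + ε * t with hg
    have hgd : ∀ t, HasDerivAt g (deriv v t + ε) t := by
      intro t
      have h1 : HasDerivAt (fun t : ℝ => ε * t) ε t := by
        simpa using (hasDerivAt_id t).const_mul ε
      exact (hv t).hasDerivAt.add h1
    have hA : AntitoneOn g (Set.Iic 0) := by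
      apply antitoneOn_of_deriv_nonpos (convex_Iic 0)
      · exact (hv.continuous.add (continuous_const.mul continuous_id)).continuousOn
      · exact fun x _ => (hgd x).differentiableAt.differentiableWithinAt
      · intro x hx
        rw [interior_Iic] at hx
        rw [(hgd x).deriv]
        have := hv' x
        have := hsq x hx.le
        linarith
    set t : ℝ := (v 0 - 1) / ε - 1 with ht
    have ht0 : t ≤ 0 := by
      have h4 : (v 0 - 1) / ε < 0 := div_neg_of_neg_of_pos (by linarith) hεpos
      rw [ht]; linarith
    have hgt : g 0 ≤ g t := hA (Set.mem_Iic.2 ht0) (Set.mem_Iic.2 le_rfl) ht0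
    have hvt : v t ≥ v 0 - ε * t := by
      simp only [hg] at hgt
      linarith [hgt]
    have : ε * t = v 0 - 1 - ε := by
      rw [ht]
      field_simp
    have := (hbound t).2
    linarith
  · intro a ha
    filter_upwards with t
    exact lt_trans (hbound t).2 ha

theorem stmt_1 (v : ℝ → ℝ) (hv : Differentiable ℝ v)
    (hv' : ∀ t, deriv v t ≤ (v t) ^ 2 - 1)
    (hbound : ∀ t, -1 < v t ∧ v t < 1) :
    StrictAnti v ∧ Filter.Tendsto v Filter.atBot (nhds 1) ∧
      Filter.Tendsto v Filter.atTop (nhds (-1)) := by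
  refine ⟨aux_anti v hv hv' hbound, aux_tendsto v hv hv' hbound, ?_⟩
  set w : ℝ → ℝ := fun t => -v (-t) with hw
  have hwderiv : ∀ t, HasDerivAt w (deriv v (-t)) t := by
    intro t
    have h1 : HasDerivAt (fun t : ℝ => v (-t)) (deriv v (-t) * (-1)) t :=
      (hv (-t)).hasDerivAt.comp t (hasDerivAt_neg t)
    have h2 := h1.neg
    simp only [mul_neg, mul_one, neg_neg] at h2
    exact h2
  have hwdiff : Differentiable ℝ w := fun t => (hwderiv t).differentiableAt
  have hw' : ∀ t, deriv w t ≤ (w t) ^ 2 - 1 := by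
    intro t
    rw [(hwderiv t).deriv]
    have := hv' (-t)
    simp only [hw]
    nlinarith
  have hwbound : ∀ t, -1 < w t ∧ w t < 1 := by
    intro t
    have := hbound (-t)
    simp only [hw]
    constructor <;> linarith [this.1, this.2]
  have h := aux_tendsto w hwdiff hw' hwbound
  have h2 : Tendsto (fun t => w (-t)) atTop (nhds 1) :=
    h.comp tendsto_neg_atTop_atBot
  have h3 : Tendsto (fun t => -(w (-t))) atTop (nhds (-1)) := h2.neg
  convert h3 using 2 with t
  simp [hw]
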